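/- Let $((K_i, Y_i))_{i \in \mathbb{N}}$ be an i.i.d. sequence of copies of the pair $(K, Y)$, where $\Pr(K = k) = k^{-5/4}/c$ with $c = \sum_{k \geq 1} k^{-5/4}$, and conditionally on $K = k$, $Y = \text{red}$ with probability $2^{-k}$ and $Y = \text{blue}$ with probability $1 - 2^{-k}$. Then almost every trajectory $(k_i, y_i)$ stabilizes: there exists $i_0$ such that for all $i > i_0$: (1) a maximal value $k_m$ among $k_1, \ldots, k_i$ is a simple record; (2) $\max\{k_1, \ldots, k_i\} > i$; and (3) $y_m = \text{blue}$ for the maximal record-time $m$ on the segment $1, \ldots, i$. -/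

import Mathlib

open MeasureTheory ProbabilityTheory Filter

/-- The two colours of the auxiliary variable `Y`. -/
inductive Color : Type
  | red : Color
  | blue : Color
  deriving DecidableEq

instance : MeasurableSpace Color := ⊤

/-- `i` is a record time of the sequence `k` if `k j < k i` for all `j < i`. -/
def IsRecordTime (k : ℕ → ℕ) (i : ℕ) : Prop := ∀ j < i, k j < k i

/-- `i` is a non-strict record time of `k` if `k j ≤ k i` for all `j < i`. -/
def IsNonStrictRecordTime (k : ℕ → ℕ) (i : ℕ) : Prop := ∀ j < i, k j ≤ k i

/-- A record time `i` is simple if `k i < k j` for all non-strict record times `j > i`. -/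
def IsSimpleRecordTime (k : ℕ → ℕ) (i : ℕ) : Prop :=
  IsRecordTime k i ∧ ∀ j > i, IsNonStrictRecordTime k j → k i < k j

/-! ### Auxiliary analytic lemmas -/

lemma exp_neg_le_aux (x : ℝ) (hx : 0 < x) : Real.exp (-x) ≤ 27 / x ^ 3 := by
  have h1 : x / 3 ≤ Real.exp (x / 3) := by
    have := Real.add_one_le_exp (x / 3); linarith
  have h2 : (x / 3) ^ 3 ≤ Real.exp (x / 3) ^ 3 :=
    pow_le_pow_left₀ (by positivity) h1 3
  have h3 : Real.exp (x / 3) ^ 3 = Real.exp x := by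
    rw [← Real.exp_nat_mul]; ring_nf
  rw [h3] at h2
  have h4 : x ^ 3 / 27 ≤ Real.exp x := by nlinarith
  rw [Real.exp_neg, inv_le_comm₀ (Real.exp_pos x) (by positivity), inv_div,
    div_le_iff₀ (by norm_num)]
  rw [div_le_iff₀ (by positivity)] at h4
  linarith

noncomputable def qq (k : ℕ) : ℝ := (k : ℝ) ^ (-(5/4 : ℝ))

lemma qq_nonneg (k : ℕ) : 0 ≤ qq k := Real.rpow_nonneg (Nat.cast_nonneg k) _

lemma qq_le_one (k : ℕ) : qq k ≤ 1 := by
  rcases Nat.eq_zero_or_pos k with h | h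
  · simp [qq, h]
  · exact Real.rpow_le_one_of_one_le_of_nonpos (by exact_mod_cast h) (by norm_num)

lemma qq_summable : Summable qq :=
  Real.summable_nat_rpow.2 (by norm_num)

lemma qq_anti {a b : ℕ} (ha : 1 ≤ a) (hab : a ≤ b) : qq b ≤ qq a :=
  Real.rpow_le_rpow_of_nonpos (by exact_mod_cast ha) (by exact_mod_cast hab) (by norm_num)

lemma tail_lower (n : ℕ) (hn : 1 ≤ n) :
    (∑ k ∈ Finset.range (n + 1), qq k) + n * qq (2 * n) ≤ ∑' k, qq k := by
  have h1 : (∑ k ∈ Finset.range (2 * n + 1), qq k) ≤ ∑' k, qq k :=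
    Summable.sum_le_tsum _ (fun k _ => qq_nonneg k) qq_summable
  have h2 : (∑ k ∈ Finset.range (n + 1), qq k) + ∑ k ∈ Finset.Ico (n + 1) (2 * n + 1), qq k
      = ∑ k ∈ Finset.range (2 * n + 1), qq k := by
    simp only [Finset.range_eq_Ico]
    exact Finset.sum_Ico_consecutive _ (by omega) (by omega)
  have h3 : (n : ℝ) * qq (2 * n) ≤ ∑ k ∈ Finset.Ico (n + 1) (2 * n + 1), qq k := by
    have := Finset.card_nsmul_le_sum (Finset.Ico (n + 1) (2 * n + 1)) qq (qq (2 * n))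
      (fun x hx => by
        rw [Finset.mem_Ico] at hx
        exact qq_anti (by omega) (by omega))
    rwa [Nat.card_Ico, nsmul_eq_mul, show 2 * n + 1 - (n + 1) = n by omega] at this
  linarith

lemma sqrt_nat_cube (i : ℕ) : Real.sqrt i ^ 3 = (i : ℝ) ^ (3/2 : ℝ) := by
  rw [Real.sqrt_eq_rpow, ← Real.rpow_natCast ((i:ℝ) ^ (1/2 : ℝ)) 3,
    ← Real.rpow_mul (Nat.cast_nonneg i)]
  norm_num

lemma delta_eq (i : ℕ) (hi : 1 ≤ i) :
    ((i ^ 2 : ℕ) : ℝ) * qq (2 * i ^ 2) = (2 : ℝ) ^ (-(5/4 : ℝ)) / Real.sqrt i := by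
  have hi0 : (0:ℝ) < (i:ℝ) := by exact_mod_cast hi
  have h2 : ((i:ℝ)^2) ^ (-(5/4:ℝ)) = (i:ℝ) ^ (-(5/2:ℝ)) := by
    rw [← Real.rpow_natCast (i:ℝ) 2, ← Real.rpow_mul hi0.le]; norm_num
  have h3 : (i:ℝ)^2 * (i:ℝ) ^ (-(5/2:ℝ)) = (i:ℝ) ^ (-(1/2:ℝ)) := by
    rw [← Real.rpow_natCast (i:ℝ) 2, ← Real.rpow_add hi0]; norm_num
  have h4 : (i:ℝ) ^ (-(1/2:ℝ)) = (Real.sqrt i)⁻¹ := by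
    rw [Real.sqrt_eq_rpow, ← Real.rpow_neg hi0.le]
  unfold qq
  push_cast
  rw [Real.mul_rpow (by norm_num) (by positivity), h2,
    show (2:ℝ)^(-(5/4:ℝ)) / Real.sqrt i = (2:ℝ)^(-(5/4:ℝ)) * (Real.sqrt i)⁻¹ from
      div_eq_mul_inv _ _, ← h4, ← h3]
  ring

lemma pow_chain (i : ℕ) (hi : 1 ≤ i) (S a : ℝ) (hS0 : 0 ≤ S) (ha : 0 < a)
    (hS : S ≤ 1 - a / Real.sqrt i) : S ^ (i + 1) ≤ 27 / (a * Real.sqrt i) ^ 3 := by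
  have hsq : (1:ℝ) ≤ Real.sqrt i := by
    rw [show (1:ℝ) = Real.sqrt 1 by simp]
    exact Real.sqrt_le_sqrt (by exact_mod_cast hi)
  have hsq0 : (0:ℝ) < Real.sqrt i := by linarith
  have hx : (0:ℝ) < a / Real.sqrt i := by positivity
  have h1 : S ^ (i+1) ≤ (1 - a / Real.sqrt i) ^ (i+1) := pow_le_pow_left₀ hS0 hS _
  have h2 : (1 - a / Real.sqrt i) ^ (i+1) ≤ Real.exp (-(a / Real.sqrt i)) ^ (i+1) := by
    apply pow_le_pow_left₀ (by linarith [hS0, hS])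
    have := Real.add_one_le_exp (-(a / Real.sqrt i)); linarith
  have h3 : Real.exp (-(a / Real.sqrt i)) ^ (i+1) = Real.exp (-((i+1) * (a / Real.sqrt i))) := by
    rw [← Real.exp_nat_mul]; congr 1; push_cast; ring
  have h4 : a * Real.sqrt i ≤ (i+1) * (a / Real.sqrt i) := by
    have hss : Real.sqrt i * Real.sqrt i = (i:ℝ) := Real.mul_self_sqrt (Nat.cast_nonneg i)
    have heq : ((i:ℝ)+1) * (a/Real.sqrt i) = ((i:ℝ)+1)*a/Real.sqrt i := by ring
    rw [heq, le_div_iff₀ hsq0]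
    nlinarith
  have h5 : Real.exp (-((i+1) * (a / Real.sqrt i))) ≤ Real.exp (-(a * Real.sqrt i)) :=
    Real.exp_le_exp.2 (by linarith)
  have h6 := exp_neg_le_aux (a * Real.sqrt i) (by positivity)
  calc S ^ (i+1) ≤ (1 - a / Real.sqrt i) ^ (i+1) := h1
    _ ≤ Real.exp (-(a / Real.sqrt i)) ^ (i+1) := h2
    _ = Real.exp (-((i+1) * (a / Real.sqrt i))) := h3
    _ ≤ Real.exp (-(a * Real.sqrt i)) := h5
    _ ≤ 27 / (a * Real.sqrt i) ^ 3 := h6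

lemma sq_qq_le (n k : ℕ) (hn : 1 ≤ n) (hk : n ≤ k) :
    qq k ^ 2 ≤ (Real.sqrt n)⁻¹ * ((k : ℝ) ^ 2)⁻¹ := by
  have hk0 : (0:ℝ) < (k:ℝ) := by exact_mod_cast lt_of_lt_of_le hn hk
  have hn0 : (0:ℝ) < (n:ℝ) := by exact_mod_cast hn
  have h1 : qq k ^ 2 = (k:ℝ) ^ (-(5/2:ℝ)) := by
    unfold qq
    rw [← Real.rpow_natCast ((k:ℝ) ^ (-(5/4:ℝ))) 2, ← Real.rpow_mul hk0.le]
    norm_num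
  have h2 : (k:ℝ) ^ (-(5/2:ℝ)) = (k:ℝ) ^ (-(1/2:ℝ)) * (k:ℝ) ^ (-(2:ℝ)) := by
    rw [← Real.rpow_add hk0]; norm_num
  have h3 : (k:ℝ) ^ (-(1/2:ℝ)) ≤ (Real.sqrt n)⁻¹ := by
    rw [show (Real.sqrt n)⁻¹ = (n:ℝ) ^ (-(1/2:ℝ)) by
      rw [Real.sqrt_eq_rpow, ← Real.rpow_neg hn0.le]]
    exact Real.rpow_le_rpow_of_nonpos hn0 (by exact_mod_cast hk) (by norm_num)
  have h4 : (k:ℝ) ^ (-(2:ℝ)) = ((k:ℝ) ^ 2)⁻¹ := by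
    rw [← Real.rpow_natCast (k:ℝ) 2, ← Real.rpow_neg hk0.le]; norm_num
  rw [h1, h2, h4]
  apply mul_le_mul_of_nonneg_right h3 (by positivity)

lemma tail_sq (n : ℕ) (hn : 1 ≤ n) (t : Finset ℕ) :
    ∑ d ∈ t, qq (n + 1 + d) ^ 2 ≤ (Real.sqrt n)⁻¹ * (n : ℝ)⁻¹ := by
  set f : ℕ → ℝ := fun d => ((n + d : ℕ) : ℝ)⁻¹ with hf
  have hstep : ∀ d : ℕ, qq (n + 1 + d) ^ 2 ≤ (Real.sqrt n)⁻¹ * (f d - f (d + 1)) := by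
    intro d
    have h1 : qq (n + 1 + d) ^ 2 ≤ (Real.sqrt n)⁻¹ * (((n + 1 + d : ℕ) : ℝ) ^ 2)⁻¹ :=
      sq_qq_le n (n + 1 + d) hn (by omega)
    refine h1.trans (mul_le_mul_of_nonneg_left ?_ (by positivity))
    have hx : (0:ℝ) < ((n + d : ℕ) : ℝ) := by positivity
    have hfd : f d - f (d + 1) = (((n + d : ℕ) : ℝ) * ((n + d + 1 : ℕ) : ℝ))⁻¹ := by
      rw [hf]
      push_cast
      rw [show (n:ℝ) + (↑d + 1) = ((n:ℝ) + d) + 1 by ring]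
      rw [mul_inv]
      field_simp
      ring
    rw [hfd, show n + 1 + d = n + d + 1 by omega]
    apply inv_anti₀ (by positivity)
    push_cast
    nlinarith
  calc ∑ d ∈ t, qq (n + 1 + d) ^ 2 ≤ ∑ d ∈ t, (Real.sqrt n)⁻¹ * (f d - f (d + 1)) :=
        Finset.sum_le_sum (fun d _ => hstep d)
    _ = (Real.sqrt n)⁻¹ * ∑ d ∈ t, (f d - f (d + 1)) := by rw [Finset.mul_sum]
    _ ≤ (Real.sqrt n)⁻¹ * (n : ℝ)⁻¹ := by
        apply mul_le_mul_of_nonneg_left ?_ (by positivity)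
        have hsub : t ⊆ Finset.range (t.sup id + 1) := fun x hx =>
          Finset.mem_range.2 (Nat.lt_succ_of_le (Finset.le_sup (f := id) hx))
        have hmono : ∀ a b : ℕ, a ≤ b → f b ≤ f a := by
          intro a b hab
          apply inv_anti₀ (by positivity)
          exact_mod_cast by omega
        calc ∑ d ∈ t, (f d - f (d + 1))
            ≤ ∑ d ∈ Finset.range (t.sup id + 1), (f d - f (d + 1)) := by
              apply Finset.sum_le_sum_of_subset_of_nonneg hsub
              intro d _ _
              have := hmono d (d+1) (by omega); linarith
          _ = f 0 - f (t.sup id + 1) := Finset.sum_range_sub' f _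
          _ ≤ f 0 := by
              have : 0 ≤ f (t.sup id + 1) := by positivity
              linarith
          _ = (n : ℝ)⁻¹ := by rw [hf]; norm_num

lemma tail_geom (i : ℕ) (t : Finset ℕ) :
    ∑ d ∈ t, ((2:ℝ)⁻¹) ^ (i + 1 + d) ≤ (2:ℝ)⁻¹ ^ i := by
  set g : ℕ → ℝ := fun d => (2:ℝ)⁻¹ ^ (i + d) with hg
  have hstep : ∀ d : ℕ, ((2:ℝ)⁻¹) ^ (i + 1 + d) = g d - g (d + 1) := by
    intro d
    rw [hg]
    simp only
    rw [show i + (d + 1) = (i + d) + 1 by omega, show i + 1 + d = (i + d) + 1 by omega,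
      pow_succ]
    ring
  calc ∑ d ∈ t, ((2:ℝ)⁻¹) ^ (i + 1 + d) = ∑ d ∈ t, (g d - g (d + 1)) :=
        Finset.sum_congr rfl (fun d _ => hstep d)
    _ ≤ (2:ℝ)⁻¹ ^ i := by
        have hsub : t ⊆ Finset.range (t.sup id + 1) := fun x hx =>
          Finset.mem_range.2 (Nat.lt_succ_of_le (Finset.le_sup (f := id) hx))
        have hmono : ∀ d : ℕ, g (d+1) ≤ g d := by
          intro d
          rw [hg]
          simp only
          apply pow_le_pow_of_le_one (by norm_num) (by norm_num) (by omega)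
        calc ∑ d ∈ t, (g d - g (d + 1))
            ≤ ∑ d ∈ Finset.range (t.sup id + 1), (g d - g (d + 1)) := by
              apply Finset.sum_le_sum_of_subset_of_nonneg hsub
              intro d _ _
              have := hmono d; linarith
          _ = g 0 - g (t.sup id + 1) := Finset.sum_range_sub' g _
          _ ≤ g 0 := by
              have : 0 ≤ g (t.sup id + 1) := by positivity
              linarith
          _ = (2:ℝ)⁻¹ ^ i := by rw [hg]; simp

lemma summable_G (a : ℝ) : Summable (fun i : ℕ => 27 / (a * Real.sqrt i) ^ 3) := by
  have h : (fun i : ℕ => 27 / (a * Real.sqrt i) ^ 3)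
      = fun i : ℕ => (27 / a ^ 3) * ((i : ℝ) ^ (-(3/2 : ℝ))) := by
    funext i
    rw [mul_pow, sqrt_nat_cube, Real.rpow_neg (Nat.cast_nonneg i)]
    rw [div_eq_mul_inv, mul_inv, div_eq_mul_inv]
    ring
  rw [h]
  exact (Real.summable_nat_rpow.2 (by norm_num)).mul_left _

lemma summable_F : Summable (fun j : ℕ => 32 / (j : ℝ) ^ 2) := by
  have h : (fun j : ℕ => 32 / (j : ℝ) ^ 2) = fun j : ℕ => 32 * (((j : ℝ) ^ 2)⁻¹) := by
    funext j; rw [div_eq_mul_inv]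
  rw [h]
  exact (Real.summable_nat_pow_inv.2 (by norm_num)).mul_left _

lemma tsum_ofReal_le (f : ℕ → ℝ) (B : ℝ) (hf : ∀ d, 0 ≤ f d)
    (h : ∀ t : Finset ℕ, ∑ d ∈ t, f d ≤ B) :
    ∑' d, ENNReal.ofReal (f d) ≤ ENNReal.ofReal B := by
  rw [ENNReal.tsum_eq_iSup_sum]
  refine iSup_le fun t => ?_
  rw [← ENNReal.ofReal_sum_of_nonneg (fun i _ => hf i)]
  exact ENNReal.ofReal_le_ofReal (h t)

/-! ### The deterministic part -/

lemma determin (k : ℕ → ℕ) (y : ℕ → Color) (N : ℕ)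
    (h1 : ∀ i ≥ N, ∃ j ≤ i, i ^ 2 < k j)
    (h2 : ∀ j ≥ N, ¬ ∃ m < j, k m = k j ∧ (j - 1) ^ 2 < k j)
    (h3 : ∀ i ≥ N, ¬ (y i = Color.red ∧ i < k i)) :
    ∃ i₀ : ℕ, ∀ i > i₀, ∃ m ≤ i,
      (∀ j ≤ i, j ≠ m → k j < k m) ∧
      IsSimpleRecordTime k m ∧
      y m = Color.blue ∧
      i < k m := by
  refine ⟨N + (Finset.range (N + 1)).sup k, fun i hi => ?_⟩
  have hiN : N ≤ i := le_of_lt (lt_of_le_of_lt (Nat.le_add_right _ _) hi)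
  have hii : i ≤ i ^ 2 := by nlinarith
  obtain ⟨m, hmmem, hmax⟩ := Finset.exists_max_image (Finset.range (i + 1)) k ⟨0, by simp⟩
  rw [Finset.mem_range, Nat.lt_succ_iff] at hmmem
  have hmax' : ∀ j ≤ i, k j ≤ k m := fun j hj =>
    hmax j (Finset.mem_range.2 (Nat.lt_succ_of_le hj))
  obtain ⟨j₀, hj₀i, hj₀⟩ := h1 i hiN
  have hbig : i ^ 2 < k m := lt_of_lt_of_le hj₀ (hmax' j₀ hj₀i)
  have hmN : N < m := by
    by_contra hle
    push_neg at hle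
    have : k m ≤ (Finset.range (N + 1)).sup k :=
      Finset.le_sup (Finset.mem_range.2 (Nat.lt_succ_of_le hle))
    omega
  have huniq : ∀ j ≤ i, j ≠ m → k j < k m := by
    intro j hj hne
    rcases lt_or_eq_of_le (hmax' j hj) with h | h
    · exact h
    exfalso
    rcases Nat.lt_or_ge j m with hjm | hjm
    · exact h2 m (le_of_lt hmN) ⟨j, hjm, h, by
        have : (m - 1) ^ 2 ≤ i ^ 2 := Nat.pow_le_pow_left (by omega) 2
        omega⟩
    · have hjm' : m < j := by omega
      refine h2 j (by omega) ⟨m, hjm', h.symm, ?_⟩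
      have : (j - 1) ^ 2 ≤ i ^ 2 := Nat.pow_le_pow_left (by omega) 2
      omega
  refine ⟨m, hmmem, huniq,
    ⟨fun j hj => huniq j (le_trans (le_of_lt hj) hmmem) (Nat.ne_of_lt hj), ?_⟩, ?_, by omega⟩
  · intro j hj hns
    have hkm : k m ≤ k j := hns m hj
    rcases lt_or_eq_of_le hkm with h | h
    · exact h
    exfalso
    rcases Nat.lt_or_ge i j with hij | hij
    · obtain ⟨l, hl, hlval⟩ := h1 (j - 1) (by omega)
      have hlj : l < j := by omega
      have : (j - 1) ^ 2 < k j := lt_of_lt_of_le hlval (hns l hlj)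
      exact h2 j (by omega) ⟨m, hj, h, this⟩
    · exact absurd (huniq j hij (by omega)) (by omega)
  · have := h3 m (le_of_lt hmN)
    rcases hy : y m with hr | hb
    · exact absurd ⟨hy, by omega⟩ this
    · rfl

/-! ### Main theorem -/

theorem trajectories_stabilize
    {Ω : Type*} [MeasurableSpace Ω] (μ : Measure Ω) [IsProbabilityMeasure μ]
    (c : ℝ) (hc : c = ∑' k : ℕ, (k : ℝ) ^ (-(5 / 4 : ℝ)))
    (K : ℕ → Ω → ℕ) (Y : ℕ → Ω → Color)
    (hmeas : ∀ i, Measurable (fun ω => (K i ω, Y i ω)))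
    (hpos : ∀ i ω, 1 ≤ K i ω)
    (hindep : iIndepFun (fun i ω => (K i ω, Y i ω)) μ)
    (hdistRed : ∀ i, ∀ k : ℕ, 1 ≤ k →
      μ {ω | K i ω = k ∧ Y i ω = Color.red} =
        ENNReal.ofReal ((2 : ℝ)⁻¹ ^ k * ((k : ℝ) ^ (-(5 / 4 : ℝ)) / c)))
    (hdistBlue : ∀ i, ∀ k : ℕ, 1 ≤ k →
      μ {ω | K i ω = k ∧ Y i ω = Color.blue} =
        ENNReal.ofReal ((1 - (2 : ℝ)⁻¹ ^ k) * ((k : ℝ) ^ (-(5 / 4 : ℝ)) / c))) :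
    ∀ᵐ ω ∂μ, ∃ i₀ : ℕ, ∀ i > i₀, ∃ m ≤ i,
      (∀ j ≤ i, j ≠ m → K j ω < K m ω) ∧
      IsSimpleRecordTime (fun n => K n ω) m ∧
      Y m ω = Color.blue ∧
      i < K m ω := by
  classical
  -- basic facts about c
  have hc' : c = ∑' k, qq k := hc
  have hc1 : (1:ℝ) ≤ c := by
    rw [hc']
    have := Summable.le_tsum qq_summable 1 (fun j _ => qq_nonneg j)
    simpa [qq] using this
  have hc0 : (0:ℝ) < c := lt_of_lt_of_le one_pos hc1
  -- measurability of K i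
  have hKmeas : ∀ i, Measurable (K i) := fun i => measurable_fst.comp (hmeas i)
  have hColorMeas : ∀ s : Set Color, MeasurableSet s := fun s => trivial
  have hsetmeas : ∀ i (k : ℕ) (z : Color), MeasurableSet {ω | K i ω = k ∧ Y i ω = z} := by
    intro i k z
    have : {ω | K i ω = k ∧ Y i ω = z}
        = (fun ω => (K i ω, Y i ω)) ⁻¹' ({k} ×ˢ {z}) := by
      ext ω; simp [Set.mem_prod]
    rw [this]
    exact (hmeas i) ((measurableSet_singleton k).prod (hColorMeas {z}))
  -- point masses
  have point : ∀ i (k : ℕ), μ {ω | K i ω = k} = ENNReal.ofReal (qq k / c) := by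
    intro i k
    rcases Nat.eq_zero_or_pos k with hk | hk
    · subst hk
      have he : {ω | K i ω = 0} = (∅ : Set Ω) := by
        ext ω; simpa using (by have := hpos i ω; omega : ¬ K i ω = 0)
      rw [he]
      simp [qq]
    · have hsplit : {ω | K i ω = k}
          = {ω | K i ω = k ∧ Y i ω = Color.red} ∪ {ω | K i ω = k ∧ Y i ω = Color.blue} := by
        ext ω
        simp only [Set.mem_setOf_eq, Set.mem_union]
        constructor
        · intro h; rcases hY : Y i ω with _ | _
          · exact Or.inl ⟨h, rfl⟩
          · exact Or.inr ⟨h, rfl⟩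
        · rintro (⟨h, _⟩ | ⟨h, _⟩) <;> exact h
      have hdisj : Disjoint {ω | K i ω = k ∧ Y i ω = Color.red}
          {ω | K i ω = k ∧ Y i ω = Color.blue} := by
        rw [Set.disjoint_left]
        rintro ω ⟨_, h1⟩ ⟨_, h2⟩
        rw [h1] at h2; exact Color.noConfusion h2
      have e1 : (0:ℝ) ≤ (2:ℝ)⁻¹ ^ k * ((k:ℝ) ^ (-(5/4:ℝ)) / c) :=
        mul_nonneg (by positivity) (div_nonneg (qq_nonneg k) hc0.le)
      have e2 : (0:ℝ) ≤ (1 - (2:ℝ)⁻¹ ^ k) * ((k:ℝ) ^ (-(5/4:ℝ)) / c) :=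
        mul_nonneg (sub_nonneg.2 (pow_le_one₀ (by norm_num) (by norm_num)))
          (div_nonneg (qq_nonneg k) hc0.le)
      rw [hsplit, measure_union hdisj (hsetmeas i k Color.blue),
        hdistRed i k hk, hdistBlue i k hk, ← ENNReal.ofReal_add e1 e2]
      congr 1
      unfold qq
      ring
  -- cdf
  have cdf : ∀ i (n : ℕ),
      μ {ω | K i ω ≤ n} = ENNReal.ofReal (∑ k ∈ Finset.range (n + 1), qq k / c) := by
    intro i n
    have hU : {ω | K i ω ≤ n} = ⋃ k ∈ Finset.range (n + 1), {ω | K i ω = k} := by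
      ext ω
      simp only [Set.mem_setOf_eq, Set.mem_iUnion, Finset.mem_range, Nat.lt_succ_iff]
      exact ⟨fun h => ⟨K i ω, h, rfl⟩, fun ⟨k, hk, he⟩ => he ▸ hk⟩
    have hdisj : (↑(Finset.range (n + 1)) : Set ℕ).PairwiseDisjoint
        (fun k => {ω | K i ω = k}) := by
      intro a _ b _ hab
      rw [Function.onFun, Set.disjoint_left]
      rintro ω h1 h2
      exact hab (h1 ▸ h2 ▸ rfl)
    have hms : ∀ k ∈ Finset.range (n + 1), MeasurableSet {ω | K i ω = k} := by
      intro k _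
      exact hKmeas i (measurableSet_singleton k)
    rw [hU, measure_biUnion_finset hdisj hms,
      Finset.sum_congr rfl (fun k _ => point i k),
      ← ENNReal.ofReal_sum_of_nonneg (fun k _ => div_nonneg (qq_nonneg k) hc0.le)]
  -- total mass of p
  have htsum_p : ∑' k, qq k / c = 1 := by
    rw [tsum_div_const, ← hc', div_self hc0.ne']
  have hS_le1 : ∀ n, ∑ k ∈ Finset.range (n + 1), qq k / c ≤ 1 := by
    intro n
    rw [← htsum_p]
    exact Summable.sum_le_tsum _ (fun k _ => div_nonneg (qq_nonneg k) hc0.le) (qq_summable.div_const c)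
  have hS_nonneg : ∀ n, (0:ℝ) ≤ ∑ k ∈ Finset.range (n + 1), qq k / c :=
    fun n => Finset.sum_nonneg (fun k _ => div_nonneg (qq_nonneg k) hc0.le)
  -- the constant a
  set a : ℝ := (2:ℝ) ^ (-(5/4:ℝ)) / c with ha_def
  have ha0 : 0 < a := by positivity
  -- upper bound on the cdf at i^2
  have hS_ub : ∀ i : ℕ, 1 ≤ i →
      ∑ k ∈ Finset.range (i ^ 2 + 1), qq k / c ≤ 1 - a / Real.sqrt i := by
    intro i hi
    have h1 := tail_lower (i ^ 2) (by nlinarith)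
    rw [delta_eq i hi] at h1
    rw [← hc'] at h1
    have h2 : ∑ k ∈ Finset.range (i ^ 2 + 1), qq k / c
        = (∑ k ∈ Finset.range (i ^ 2 + 1), qq k) / c := by
      rw [Finset.sum_div]
    rw [h2, ha_def]
    rw [div_le_iff₀ hc0]
    have hsq0 : (0:ℝ) < Real.sqrt i := Real.sqrt_pos.2 (by exact_mod_cast hi)
    have expand : (1 - (2:ℝ) ^ (-(5/4:ℝ)) / c / Real.sqrt i) * c
        = c - (2:ℝ) ^ (-(5/4:ℝ)) / Real.sqrt i := by
      field_simp
    rw [expand]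
    linarith
  -- Event s1 : the running max up to i is at most i^2
  set s1 : ℕ → Set Ω := fun i => {ω | ∀ j ≤ i, K j ω ≤ i ^ 2} with hs1_def
  -- Event s2 : a tie at a high value at time j
  set s2 : ℕ → Set Ω := fun j => {ω | ∃ m < j, K m ω = K j ω ∧ (j - 1) ^ 2 < K j ω} with hs2_def
  -- Event s3 : red at a high value
  set s3 : ℕ → Set Ω := fun i => {ω | Y i ω = Color.red ∧ i < K i ω} with hs3_def
  -- independence of the K's
  have hindepK : iIndepFun K μ := by
    have := hindep.comp (fun _ => Prod.fst) (fun _ => measurable_fst)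
    exact this
  -- bound for s1
  have hs1_bound : ∀ i, μ (s1 i) ≤ ENNReal.ofReal (27 / (a * Real.sqrt i) ^ 3) := by
    intro i
    rcases Nat.eq_zero_or_pos i with hi | hi
    · subst hi
      have he : s1 0 = (∅ : Set Ω) := by
        ext ω
        simp only [hs1_def, Set.mem_setOf_eq, Set.mem_empty_iff_false, iff_false, not_forall]
        exact ⟨0, le_refl 0, by have := hpos 0 ω; omega⟩
      rw [he]
      simp
    · have hU : s1 i = ⋂ j ∈ Finset.range (i + 1), K j ⁻¹' {k | k ≤ i ^ 2} := by
        ext ω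
        simp only [hs1_def, Set.mem_setOf_eq, Set.mem_iInter, Finset.mem_range,
          Nat.lt_succ_iff, Set.mem_preimage]
      have hprod := hindepK.measure_inter_preimage_eq_mul (Finset.range (i + 1))
        (sets := fun _ => {k | k ≤ i ^ 2}) (fun j _ => trivial)
      rw [hU, hprod]
      have heach : ∀ j ∈ Finset.range (i + 1), μ (K j ⁻¹' {k | k ≤ i ^ 2})
          = ENNReal.ofReal (∑ k ∈ Finset.range (i ^ 2 + 1), qq k / c) := by
        intro j _
        exact cdf j (i ^ 2)
      rw [Finset.prod_congr rfl heach, Finset.prod_const, Finset.card_range,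
        ← ENNReal.ofReal_pow (hS_nonneg _)]
      exact ENNReal.ofReal_le_ofReal
        (pow_chain i hi _ a (hS_nonneg _) ha0 (hS_ub i hi))
  -- bound for s2
  have hs2_bound : ∀ j, μ (s2 j) ≤ ENNReal.ofReal (32 / (j:ℝ) ^ 2) := by
    intro j
    match j, (by omega : j = 0 ∨ j = 1 ∨ 2 ≤ j) with
    | 0, _ =>
      have he : s2 0 = (∅ : Set Ω) := by
        ext ω
        simp [hs2_def]
      rw [he]; simp
    | 1, _ =>
      refine le_trans prob_le_one ?_
      rw [show (32 / ((1:ℕ):ℝ) ^ 2) = 32 by norm_num]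
      exact ENNReal.one_le_ofReal.2 (by norm_num)
    | (j+2), _ =>
      have hn_def : (j + 2 - 1) ^ 2 = (j + 1) ^ 2 := by norm_num
      set n : ℕ := (j + 1) ^ 2 with hn_def2
      have hn1 : 1 ≤ n := Nat.one_le_iff_ne_zero.2 (by positivity)
      -- inclusion in a union
      have hsub : s2 (j+2) ⊆ ⋃ m ∈ Finset.range (j+2),
          ⋃ d : ℕ, (K m ⁻¹' {n + 1 + d} ∩ K (j+2) ⁻¹' {n + 1 + d}) := by
        intro ω hω
        obtain ⟨m, hm, heq, hgt⟩ := hω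
        rw [hn_def] at hgt
        have key : ∀ q : ℕ, q < K (j+2) ω → K (j+2) ω = q + 1 + (K (j+2) ω - (q+1)) :=
          fun q h => by omega
        simp only [Set.mem_iUnion, Finset.mem_range]
        refine ⟨m, hm, K (j+2) ω - (n + 1), ?_, ?_⟩
        · simp only [Set.mem_preimage, Set.mem_singleton_iff]
          rw [heq]
          exact key n hgt
        · simp only [Set.mem_preimage, Set.mem_singleton_iff]
          exact key n hgt
      -- measure of each intersection
      have hinter : ∀ m, m < j + 2 → ∀ k : ℕ,
          μ (K m ⁻¹' {k} ∩ K (j+2) ⁻¹' {k}) ≤ ENNReal.ofReal (qq k ^ 2) := by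
        intro m hm k
        have hIF : IndepFun (K m) (K (j+2)) μ := by
          have := hindepK.indepFun (show m ≠ j + 2 by omega)
          exact this
        rw [hIF.measure_inter_preimage_eq_mul _ _ (measurableSet_singleton k)
          (measurableSet_singleton k)]
        have hpt : μ (K m ⁻¹' {k}) = ENNReal.ofReal (qq k / c) := point m k
        have hpt2 : μ (K (j+2) ⁻¹' {k}) = ENNReal.ofReal (qq k / c) := point (j+2) k
        rw [hpt, hpt2, ← ENNReal.ofReal_mul (div_nonneg (qq_nonneg k) hc0.le)]
        apply ENNReal.ofReal_le_ofReal
        have h1 : qq k / c ≤ qq k := div_le_self (qq_nonneg k) hc1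
        have h2 : 0 ≤ qq k / c := div_nonneg (qq_nonneg k) hc0.le
        nlinarith [qq_nonneg k]
      -- bound the measure
      calc μ (s2 (j+2))
          ≤ μ (⋃ m ∈ Finset.range (j+2),
            ⋃ d : ℕ, (K m ⁻¹' {n + 1 + d} ∩ K (j+2) ⁻¹' {n + 1 + d})) := measure_mono hsub
        _ ≤ ∑ m ∈ Finset.range (j+2),
            μ (⋃ d : ℕ, (K m ⁻¹' {n + 1 + d} ∩ K (j+2) ⁻¹' {n + 1 + d})) :=
              measure_biUnion_finset_le _ _
        _ ≤ ∑ m ∈ Finset.range (j+2), ENNReal.ofReal ((Real.sqrt n)⁻¹ * (n : ℝ)⁻¹) := by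
            apply Finset.sum_le_sum
            intro m hm
            rw [Finset.mem_range] at hm
            calc μ (⋃ d : ℕ, (K m ⁻¹' {n + 1 + d} ∩ K (j+2) ⁻¹' {n + 1 + d}))
                ≤ ∑' d : ℕ, μ (K m ⁻¹' {n + 1 + d} ∩ K (j+2) ⁻¹' {n + 1 + d}) :=
                  measure_iUnion_le _
              _ ≤ ∑' d : ℕ, ENNReal.ofReal (qq (n + 1 + d) ^ 2) :=
                  ENNReal.tsum_le_tsum (fun d => hinter m hm (n + 1 + d))
              _ ≤ ENNReal.ofReal ((Real.sqrt n)⁻¹ * (n : ℝ)⁻¹) :=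
                  tsum_ofReal_le _ _ (fun d => sq_nonneg _) (tail_sq n hn1)
        _ = (j+2 : ℕ) • ENNReal.ofReal ((Real.sqrt n)⁻¹ * (n : ℝ)⁻¹) := by
            rw [Finset.sum_const, Finset.card_range]
        _ ≤ ENNReal.ofReal (32 / ((j+2 : ℕ):ℝ) ^ 2) := by
            rw [nsmul_eq_mul, show ((j+2 : ℕ) : ENNReal) = ENNReal.ofReal ((j+2:ℕ):ℝ) from
              (ENNReal.ofReal_natCast _).symm, ← ENNReal.ofReal_mul (by positivity)]
            apply ENNReal.ofReal_le_ofReal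
            -- now a real inequality
            have hsqn : Real.sqrt n = (j:ℝ) + 1 := by
              rw [hn_def2]
              push_cast
              exact Real.sqrt_sq (by positivity)
            have hncast : ((n:ℕ):ℝ) = ((j:ℝ) + 1) ^ 2 := by
              rw [hn_def2]; push_cast; ring
            have hexp : ((j+2 : ℕ):ℝ) * ((Real.sqrt n)⁻¹ * ((n:ℕ):ℝ)⁻¹)
                = ((j:ℝ) + 2) / ((j:ℝ) + 1) ^ 3 := by
              have h13 : ((j:ℝ)+1) ^ 3 = ((j:ℝ)+1) * ((j:ℝ)+1) ^ 2 := by ring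
              rw [hsqn, hncast, div_eq_mul_inv, h13, mul_inv]
              push_cast
              ring
            rw [hexp, div_le_div_iff₀ (by positivity) (by positivity)]
            have hj0 : (0:ℝ) ≤ (j:ℝ) := Nat.cast_nonneg j
            push_cast
            nlinarith [hj0, sq_nonneg (j:ℝ), mul_nonneg (mul_nonneg hj0 hj0) hj0]
  -- bound for s3
  have hs3_bound : ∀ i, μ (s3 i) ≤ ENNReal.ofReal ((2:ℝ)⁻¹ ^ i) := by
    intro i
    have hsub : s3 i ⊆ ⋃ d : ℕ, {ω | K i ω = i + 1 + d ∧ Y i ω = Color.red} := by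
      rintro ω ⟨hred, hgt⟩
      simp only [Set.mem_iUnion, Set.mem_setOf_eq]
      exact ⟨K i ω - (i + 1), by omega, hred⟩
    calc μ (s3 i) ≤ ∑' d : ℕ, μ {ω | K i ω = i + 1 + d ∧ Y i ω = Color.red} :=
          le_trans (measure_mono hsub) (measure_iUnion_le _)
      _ ≤ ∑' d : ℕ, ENNReal.ofReal ((2:ℝ)⁻¹ ^ (i + 1 + d)) := by
          apply ENNReal.tsum_le_tsum
          intro d
          rw [hdistRed i (i + 1 + d) (by omega)]
          apply ENNReal.ofReal_le_ofReal
          have h1 : (i + 1 + d : ℕ) ≥ 1 := by omega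
          have h2 : ((i + 1 + d : ℕ):ℝ) ^ (-(5/4:ℝ)) / c ≤ 1 :=
            div_le_one_of_le₀ ((qq_le_one (i + 1 + d)).trans hc1) hc0.le
          have h3 : (0:ℝ) ≤ ((i + 1 + d : ℕ):ℝ) ^ (-(5/4:ℝ)) / c := by positivity
          calc (2:ℝ)⁻¹ ^ (i+1+d) * (((i + 1 + d : ℕ):ℝ) ^ (-(5/4:ℝ)) / c)
              ≤ (2:ℝ)⁻¹ ^ (i+1+d) * 1 := by
                apply mul_le_mul_of_nonneg_left h2 (by positivity)
            _ = (2:ℝ)⁻¹ ^ (i+1+d) := mul_one _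
      _ ≤ ENNReal.ofReal ((2:ℝ)⁻¹ ^ i) :=
          tsum_ofReal_le _ _ (fun d => by positivity) (tail_geom i)
  -- Borel–Cantelli
  have hbc1 : ∀ᵐ ω ∂μ, ∀ᶠ i in atTop, ω ∉ s1 i := by
    apply ae_eventually_notMem
    apply ne_top_of_le_ne_top _ (ENNReal.tsum_le_tsum hs1_bound)
    rw [← ENNReal.ofReal_tsum_of_nonneg (fun i => by positivity) (summable_G a)]
    exact ENNReal.ofReal_ne_top
  have hbc2 : ∀ᵐ ω ∂μ, ∀ᶠ j in atTop, ω ∉ s2 j := by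
    apply ae_eventually_notMem
    apply ne_top_of_le_ne_top _ (ENNReal.tsum_le_tsum hs2_bound)
    rw [← ENNReal.ofReal_tsum_of_nonneg (fun i => by positivity) summable_F]
    exact ENNReal.ofReal_ne_top
  have hbc3 : ∀ᵐ ω ∂μ, ∀ᶠ i in atTop, ω ∉ s3 i := by
    apply ae_eventually_notMem
    apply ne_top_of_le_ne_top _ (ENNReal.tsum_le_tsum hs3_bound)
    rw [← ENNReal.ofReal_tsum_of_nonneg (fun i => by positivity)
      ((summable_geometric_of_lt_one (by norm_num) (by norm_num)))]
    exact ENNReal.ofReal_ne_top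
  filter_upwards [hbc1, hbc2, hbc3] with ω h1 h2 h3
  rw [eventually_atTop] at h1 h2 h3
  obtain ⟨N1, hN1⟩ := h1
  obtain ⟨N2, hN2⟩ := h2
  obtain ⟨N3, hN3⟩ := h3
  apply determin (fun n => K n ω) (fun n => Y n ω) (max N1 (max N2 N3))
  · intro i hi
    have := hN1 i (le_trans (le_max_left _ _) hi)
    simp only [hs1_def, Set.mem_setOf_eq, not_forall] at this
    obtain ⟨j, hj, hval⟩ := this
    exact ⟨j, hj, by omega⟩
  · intro j hj
    have := hN2 j (le_trans (le_trans (le_max_left _ _) (le_max_right N1 _)) hj)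
    simp only [hs2_def, Set.mem_setOf_eq] at this
    exact this
  · intro i hi
    have := hN3 i (le_trans (le_trans (le_max_right N2 _) (le_max_right N1 _)) hi)
    simp only [hs3_def, Set.mem_setOf_eq] at this
    exact this
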